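/- Let P be the standard k-variate Gaussian measure normalized so that MAD = 1 (i.e., X = W/b with W standard normal and b = Φ^{-1}(3/4)), and T_P = 0. Then the scatter halfspace depth satisfies HD_P(Σ) = 2 min( Φ(b √λ_k(Σ)) − 1/2, 1 − Φ(b √λ_1(Σ)) ), where λ_1(Σ) and λ_k(Σ) are the largest and smallest eigenvalues of Σ and Φ is the standard normal CDF. -/

import Mathlib

open MeasureTheory Matrix

/-- Largest "eigenvalue" via the Rayleigh quotient (equals the largest eigenvalue
for symmetric matrices). -/
noncomputable def lamMax {k : ℕ} (A : Matrix (Fin k) (Fin k) ℝ) : ℝ :=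
  ⨆ u : {u : Fin k → ℝ // u ⬝ᵥ u = 1}, u.1 ⬝ᵥ A *ᵥ u.1

/-- Smallest "eigenvalue" via the Rayleigh quotient. -/
noncomputable def lamMin {k : ℕ} (A : Matrix (Fin k) (Fin k) ℝ) : ℝ :=
  ⨅ u : {u : Fin k → ℝ // u ⬝ᵥ u = 1}, u.1 ⬝ᵥ A *ᵥ u.1

/-- The scatter halfspace depth of a scatter matrix `Sg` w.r.t. the probability
measure `P`, with location `T`. -/
noncomputable def HD {k : ℕ} (P : Measure (Fin k → ℝ)) (T : Fin k → ℝ)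
    (Sg : Matrix (Fin k) (Fin k) ℝ) : ℝ :=
  ⨅ u : {u : Fin k → ℝ // u ⬝ᵥ u = 1},
    min (P {x | |u.1 ⬝ᵥ (x - T)| ≤ Real.sqrt (u.1 ⬝ᵥ Sg *ᵥ u.1)}).toReal
        (P {x | Real.sqrt (u.1 ⬝ᵥ Sg *ᵥ u.1) ≤ |u.1 ⬝ᵥ (x - T)|}).toReal

/-- Matrix square root via the continuous functional calculus. -/
noncomputable def msqrt {k : ℕ} (A : Matrix (Fin k) (Fin k) ℝ) : Matrix (Fin k) (Fin k) ℝ :=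
  cfc Real.sqrt A

/-- Matrix logarithm via the continuous functional calculus. -/
noncomputable def mlog {k : ℕ} (A : Matrix (Fin k) (Fin k) ℝ) : Matrix (Fin k) (Fin k) ℝ :=
  cfc Real.log A

/-- Matrix real power via the continuous functional calculus. -/
noncomputable def mpow {k : ℕ} (A : Matrix (Fin k) (Fin k) ℝ) (t : ℝ) :
    Matrix (Fin k) (Fin k) ℝ :=
  cfc (fun x : ℝ => x ^ t) A

/-- The geodesic path from `A` to `B` in the space of positive definite matrices. -/
noncomputable def geoPath {k : ℕ} (A B : Matrix (Fin k) (Fin k) ℝ) (t : ℝ) :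
    Matrix (Fin k) (Fin k) ℝ :=
  msqrt A * mpow ((msqrt A)⁻¹ * B * (msqrt A)⁻¹) t * msqrt A

/-- The harmonic path from `A` to `B`. -/
noncomputable def harmPath {k : ℕ} (A B : Matrix (Fin k) (Fin k) ℝ) (t : ℝ) :
    Matrix (Fin k) (Fin k) ℝ :=
  ((1 - t) • A⁻¹ + t • B⁻¹)⁻¹

/-- Frobenius norm of a matrix. -/
noncomputable def frob {k : ℕ} (A : Matrix (Fin k) (Fin k) ℝ) : ℝ :=
  Real.sqrt (∑ i, ∑ j, (A i j) ^ 2)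

/-- Geodesic distance on the space of positive definite matrices. -/
noncomputable def dg {k : ℕ} (A B : Matrix (Fin k) (Fin k) ℝ) : ℝ :=
  frob (mlog ((msqrt A)⁻¹ * B * (msqrt A)⁻¹))

/-- Sign vectors in `{-1,1}^k`. -/
def SignVec (k : ℕ) := {s : Fin k → ℝ // ∀ i, s i = 1 ∨ s i = -1}

/-- Standard normal CDF. -/
noncomputable def Phi : ℝ → ℝ :=
  fun x => ProbabilityTheory.cdf (ProbabilityTheory.gaussianReal 0 1) x


section AuxHD

open ProbabilityTheory Real Set
open scoped NNReal ENNReal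

private lemma aux_pdf_conv (a c : ℝ) (ha : 0 < a) (hc : 0 < c) (z : ℝ) :
    ∫ x : ℝ, gaussianPDFReal 0 a.toNNReal x * gaussianPDFReal 0 c.toNNReal (z - x)
      = gaussianPDFReal 0 (a + c).toNNReal z := by
  have hac : 0 < a + c := by linarith
  have hπ := Real.pi_pos
  set B : ℝ := (a+c)/(2*a*c) with hB
  have hBpos : 0 < B := by positivity
  set m : ℝ := a*z/(a+c) with hm
  have key : ∀ x : ℝ, gaussianPDFReal 0 a.toNNReal x * gaussianPDFReal 0 c.toNNReal (z - x)
      = ((√(2 * π * a))⁻¹ * (√(2 * π * c))⁻¹ * rexp (- z^2 / (2*(a+c))))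
        * rexp (-B * (x - m)^2) := by
    intro x
    simp only [gaussianPDFReal, Real.coe_toNNReal _ ha.le, Real.coe_toNNReal _ hc.le, sub_zero]
    have : rexp (-x ^ 2 / (2 * a)) * rexp (-(z - x) ^ 2 / (2 * c))
        = rexp (- z^2 / (2*(a+c))) * rexp (-B * (x - m)^2) := by
      rw [← Real.exp_add, ← Real.exp_add]
      congr 1
      rw [hB, hm]
      field_simp
      ring
    calc (√(2 * π * a))⁻¹ * rexp (-x ^ 2 / (2 * a))
          * ((√(2 * π * c))⁻¹ * rexp (-(z - x) ^ 2 / (2 * c)))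
        = (√(2 * π * a))⁻¹ * (√(2 * π * c))⁻¹
          * (rexp (-x ^ 2 / (2 * a)) * rexp (-(z - x) ^ 2 / (2 * c))) := by ring
      _ = _ := by rw [this]; ring
  rw [funext key, MeasureTheory.integral_const_mul]
  have hshift : ∫ x : ℝ, rexp (-B * (x - m)^2) = ∫ x : ℝ, rexp (-B * x^2) :=
    integral_sub_right_eq_self (fun x => rexp (-B * x^2)) m
  rw [hshift, integral_gaussian]
  simp only [gaussianPDFReal, Real.coe_toNNReal _ hac.le, sub_zero]
  have hconst : (√(2 * π * a))⁻¹ * (√(2 * π * c))⁻¹ * √(π / B) = (√(2 * π * (a+c)))⁻¹ := by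
    rw [← Real.sqrt_inv, ← Real.sqrt_inv, ← Real.sqrt_mul (by positivity),
      ← Real.sqrt_mul (by positivity), ← Real.sqrt_inv]
    congr 1
    rw [hB]
    field_simp
  rw [← hconst]
  ring

private lemma aux_gaussianPDFReal_le (v : ℝ≥0) (x : ℝ) :
    gaussianPDFReal 0 v x ≤ (√(2 * π * v))⁻¹ := by
  rw [gaussianPDFReal]
  have h1 : rexp (-(x - 0) ^ 2 / (2 * v)) ≤ 1 := by
    rw [Real.exp_le_one_iff]
    apply div_nonpos_of_nonpos_of_nonneg
    · simpa using sq_nonneg (x - 0)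
    · positivity
  calc (√(2 * π * v))⁻¹ * rexp (-(x - 0) ^ 2 / (2 * v)) ≤ (√(2 * π * v))⁻¹ * 1 := by
        gcongr
    _ = (√(2 * π * v))⁻¹ := mul_one _

private lemma aux_integrable_pdf_mul (a c : ℝ≥0) (z : ℝ) :
    Integrable (fun x => gaussianPDFReal 0 a x * gaussianPDFReal 0 c (z - x)) volume := by
  have : (fun x => gaussianPDFReal 0 a x * gaussianPDFReal 0 c (z - x))
      = fun x => (fun x => gaussianPDFReal 0 c (z - x)) x
          * (fun x => gaussianPDFReal 0 a x) x := by
    ext x; ring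
  rw [this]
  refine Integrable.bdd_mul (c := (√(2 * π * c))⁻¹) (integrable_gaussianPDFReal 0 a) ?_ ?_
  · exact ((measurable_gaussianPDFReal 0 c).comp
      (measurable_const.sub measurable_id)).aestronglyMeasurable
  · refine ae_of_all _ fun x => ?_
    rw [Real.norm_eq_abs, abs_of_nonneg (gaussianPDFReal_nonneg _ _ _)]
    exact aux_gaussianPDFReal_le c _

private lemma aux_lintegral_pdf_conv (a c : ℝ≥0) (ha : a ≠ 0) (hc : c ≠ 0) (z : ℝ) :
    ∫⁻ x, gaussianPDF 0 a x * gaussianPDF 0 c (z - x) = gaussianPDF 0 (a + c) z := by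
  have ha' : 0 < (a : ℝ) := by exact_mod_cast zero_lt_iff.mpr ha
  have hc' : 0 < (c : ℝ) := by exact_mod_cast zero_lt_iff.mpr hc
  simp_rw [gaussianPDF, ← ENNReal.ofReal_mul (gaussianPDFReal_nonneg _ _ _)]
  rw [← ofReal_integral_eq_lintegral_ofReal (aux_integrable_pdf_mul a c z)
    (ae_of_all _ fun x => mul_nonneg (gaussianPDFReal_nonneg _ _ _)
      (gaussianPDFReal_nonneg _ _ _))]
  congr 1
  have := aux_pdf_conv (a : ℝ) (c : ℝ) ha' hc' z
  simp only [Real.toNNReal_coe] at this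
  rw [show ((a:ℝ) + (c:ℝ)).toNNReal = a + c by
    rw [← NNReal.coe_add, Real.toNNReal_coe]] at this
  exact this

private lemma aux_gaussian_conv (a c : ℝ≥0) :
    Measure.map (fun p : ℝ × ℝ => p.1 + p.2)
      ((gaussianReal 0 a).prod (gaussianReal 0 c)) = gaussianReal 0 (a + c) := by
  by_cases ha : a = 0
  · subst ha
    rw [gaussianReal_zero_var, Measure.dirac_prod,
      Measure.map_map (by fun_prop) (by fun_prop)]
    simp [Function.comp_def, Measure.map_id]
  by_cases hc : c = 0
  · subst hc
    rw [gaussianReal_zero_var, Measure.prod_dirac,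
      Measure.map_map (by fun_prop) (by fun_prop)]
    simp [Function.comp_def, Measure.map_id]
  have hac : a + c ≠ 0 := by positivity
  ext s hs
  rw [Measure.map_apply (by fun_prop) hs,
    Measure.prod_apply (hs.preimage (by fun_prop)),
    gaussianReal_apply _ hac s]
  have step1 : ∀ x : ℝ, gaussianReal 0 c (Prod.mk x ⁻¹' ((fun p : ℝ × ℝ => p.1 + p.2) ⁻¹' s))
      = ∫⁻ z, gaussianPDF 0 c (z - x) ∂(volume.restrict s) := by
    intro x
    have hpre : (Prod.mk x ⁻¹' ((fun p : ℝ × ℝ => p.1 + p.2) ⁻¹' s))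
        = (fun y => x + y) ⁻¹' s := rfl
    rw [hpre, gaussianReal_apply _ hc]
    have hmp : MeasurePreserving (fun y : ℝ => x + y) volume volume :=
      measurePreserving_add_left volume x
    have hemb : MeasurableEmbedding (fun y : ℝ => x + y) :=
      (Homeomorph.addLeft x).measurableEmbedding
    have := hmp.setLIntegral_comp_preimage_emb hemb (fun z => gaussianPDF 0 c (z - x)) s
    simp only [add_sub_cancel_left] at this
    rw [← this]
  simp_rw [step1]
  have hmeas_inner : Measurable fun x : ℝ =>
      ∫⁻ z, gaussianPDF 0 c (z - x) ∂(volume.restrict s) := by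
    apply Measurable.lintegral_prod_right (f := fun x z => gaussianPDF 0 c (z - x))
    exact (measurable_gaussianPDF 0 c).comp (measurable_snd.sub measurable_fst)
  rw [gaussianReal_of_var_ne_zero _ ha,
    lintegral_withDensity_eq_lintegral_mul _ (measurable_gaussianPDF _ _) hmeas_inner]
  simp only [Pi.mul_apply]
  have hmul : ∀ x : ℝ, gaussianPDF 0 a x * ∫⁻ z, gaussianPDF 0 c (z - x) ∂(volume.restrict s)
      = ∫⁻ z, gaussianPDF 0 a x * gaussianPDF 0 c (z - x) ∂(volume.restrict s) := by
    intro x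
    exact (lintegral_const_mul _ (show Measurable fun z : ℝ => gaussianPDF 0 c (z - x) from
      (measurable_gaussianPDF 0 c).comp (measurable_id.sub measurable_const))).symm
  simp_rw [hmul]
  rw [lintegral_lintegral_swap]
  · refine setLIntegral_congr_fun hs (fun z _ => ?_)
    exact aux_lintegral_pdf_conv a c ha hc z
  · apply Measurable.aemeasurable
    exact ((measurable_gaussianPDF 0 a).comp measurable_fst).mul
      ((measurable_gaussianPDF 0 c).comp (measurable_snd.sub measurable_fst))

private lemma aux_dot_pi_gaussian : ∀ (n : ℕ) (u : Fin n → ℝ),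
    Measure.map (fun w : Fin n → ℝ => ∑ i, u i * w i)
      (Measure.pi fun _ : Fin n => gaussianReal 0 1)
      = gaussianReal 0 (∑ i, (u i)^2 : ℝ).toNNReal := by
  intro n
  induction n with
  | zero =>
    intro u
    simp only [Finset.univ_eq_empty, Finset.sum_empty, Real.toNNReal_zero,
      gaussianReal_zero_var]
    rw [show (fun w : Fin 0 → ℝ => (0:ℝ)) = fun _ => 0 from rfl, Measure.map_const]
    simp
  | succ n ih =>
    intro u
    have hmp := measurePreserving_piFinSuccAbove (fun _ : Fin (n+1) => gaussianReal 0 1) 0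
    set e := MeasurableEquiv.piFinSuccAbove (fun _ : Fin (n+1) => ℝ) 0 with he
    have hcomp : (fun w : Fin (n+1) → ℝ => ∑ i, u i * w i)
        = (fun p : ℝ × (Fin n → ℝ) =>
            (fun x : ℝ => u 0 * x) p.1
              + (fun y : Fin n → ℝ => ∑ j, u j.succ * y j) p.2) ∘ e := by
      ext w
      simp only [Function.comp_apply, he, MeasurableEquiv.piFinSuccAbove_apply]
      rw [Fin.sum_univ_succ]
      simp [Fin.removeNth, Fin.succAbove_zero, Fin.tail]
    rw [hcomp, ← Measure.map_map (by fun_prop) e.measurable, hmp.map_eq]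
    have hsplit : (fun p : ℝ × (Fin n → ℝ) =>
            (fun x : ℝ => u 0 * x) p.1 + (fun y : Fin n → ℝ => ∑ j, u j.succ * y j) p.2)
        = (fun q : ℝ × ℝ => q.1 + q.2) ∘
            (Prod.map (fun x : ℝ => u 0 * x)
              (fun y : Fin n → ℝ => ∑ j, u j.succ * y j)) := rfl
    rw [hsplit, ← Measure.map_map (by fun_prop) (by fun_prop),
      ← Measure.map_prod_map _ _ (show Measurable fun x : ℝ => u 0 * x by fun_prop)
        (show Measurable fun y : Fin n → ℝ => ∑ j, u j.succ * y j by fun_prop)]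
    rw [gaussianReal_map_const_mul (u 0), ih (fun j => u j.succ), mul_zero,
      aux_gaussian_conv]
    congr 1
    rw [Fin.sum_univ_succ]
    have h1 : (0:ℝ) ≤ ∑ i : Fin n, u i.succ ^ 2 := Finset.sum_nonneg fun i _ => sq_nonneg _
    have h2 : (0:ℝ) ≤ u 0 ^ 2 + ∑ i : Fin n, u i.succ ^ 2 := add_nonneg (sq_nonneg _) h1
    ext
    simp only [NNReal.coe_add, NNReal.coe_mul, NNReal.coe_one, NNReal.coe_mk, mul_one,
      Real.coe_toNNReal _ h1, Real.coe_toNNReal _ h2]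

private lemma aux_Phi_mono : Monotone Phi := (cdf (gaussianReal 0 1)).mono

private lemma aux_gauss_singleton (a : ℝ) : gaussianReal 0 1 {a} = 0 :=
  gaussianReal_absolutelyContinuous 0 one_ne_zero (measure_singleton a)

private lemma aux_gauss_union_singleton (s : Set ℝ) (a : ℝ) :
    gaussianReal 0 1 (s ∪ {a}) = gaussianReal 0 1 s := by
  refine le_antisymm ?_ (measure_mono subset_union_left)
  calc gaussianReal 0 1 (s ∪ {a}) ≤ gaussianReal 0 1 s + gaussianReal 0 1 {a} :=
        measure_union_le _ _
    _ = gaussianReal 0 1 s := by rw [aux_gauss_singleton, add_zero]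

private lemma aux_gauss_map_neg :
    (gaussianReal 0 1).map (fun x : ℝ => -x) = gaussianReal 0 1 := by
  have := gaussianReal_map_const_mul (μ := 0) (v := 1) (-1)
  simp only [neg_one_mul, mul_zero] at this
  rw [this]
  congr 1
  ext
  norm_num

private lemma aux_Phi_def (x : ℝ) : Phi x = (gaussianReal 0 1 (Iic x)).toReal := by
  rw [Phi, cdf_eq_real, measureReal_def]

private lemma aux_Phi_neg (x : ℝ) : Phi (-x) = 1 - Phi x := by
  have h1 : gaussianReal 0 1 (Iic (-x)) = gaussianReal 0 1 (Ici x) := by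
    conv_lhs => rw [← aux_gauss_map_neg]
    rw [Measure.map_apply (by fun_prop) measurableSet_Iic]
    congr 1
    ext y
    simp [neg_le]
  have h2 : gaussianReal 0 1 (Ici x) = 1 - gaussianReal 0 1 (Iic x) := by
    have hIio : gaussianReal 0 1 (Iio x) = gaussianReal 0 1 (Iic x) := by
      have : Iic x = Iio x ∪ {x} := by
        ext y; simp [le_iff_lt_or_eq]
      rw [this, aux_gauss_union_singleton]
    rw [← compl_Iio, measure_compl measurableSet_Iio (measure_ne_top _ _), hIio]
    simp
  rw [aux_Phi_def, aux_Phi_def, h1, h2, ENNReal.toReal_sub_of_le (prob_le_one) (by simp)]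
  simp

private lemma aux_Phi_zero : Phi 0 = 1 / 2 := by
  have := aux_Phi_neg 0
  rw [neg_zero] at this
  linarith

private lemma aux_gauss_abs_le (t : ℝ) (ht : 0 ≤ t) :
    (gaussianReal 0 1 {y : ℝ | |y| ≤ t}).toReal = 2 * Phi t - 1 := by
  have hset : {y : ℝ | |y| ≤ t} = Icc (-t) t := by
    ext y; simp [abs_le]
  have hIcc : gaussianReal 0 1 (Icc (-t) t) = gaussianReal 0 1 (Ioc (-t) t) := by
    have : Icc (-t) t = Ioc (-t) t ∪ {-t} := by
      ext y
      simp only [mem_Icc, mem_Ioc, union_singleton, mem_insert_iff]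
      constructor
      · rintro ⟨h1, h2⟩
        rcases eq_or_lt_of_le h1 with h | h
        · exact Or.inl h.symm
        · exact Or.inr ⟨h, h2⟩
      · rintro (rfl | ⟨h1, h2⟩)
        · exact ⟨le_refl _, by linarith⟩
        · exact ⟨h1.le, h2⟩
    rw [this, aux_gauss_union_singleton]
  have hsplit : gaussianReal 0 1 (Iic (-t)) + gaussianReal 0 1 (Ioc (-t) t)
      = gaussianReal 0 1 (Iic t) := by
    rw [← measure_union (Iic_disjoint_Ioc le_rfl) measurableSet_Ioc, Iic_union_Ioc_eq_Iic]
    linarith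
  have hR := congrArg ENNReal.toReal hsplit
  rw [ENNReal.toReal_add (measure_ne_top _ _) (measure_ne_top _ _)] at hR
  rw [hset, hIcc]
  have hA : ((gaussianReal 0 1) (Iic (-t))).toReal = 1 - Phi t := by
    rw [← aux_Phi_def]; exact aux_Phi_neg t
  have hB : ((gaussianReal 0 1) (Iic t)).toReal = Phi t := (aux_Phi_def t).symm
  linarith

private lemma aux_gauss_abs_ge (t : ℝ) (ht : 0 ≤ t) :
    (gaussianReal 0 1 {y : ℝ | t ≤ |y|}).toReal = 2 - 2 * Phi t := by
  have hset : {y : ℝ | t ≤ |y|} = (Ioo (-t) t)ᶜ := by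
    ext y
    simp only [mem_setOf_eq, mem_compl_iff, mem_Ioo, not_and_or, not_lt, le_abs, le_neg]
    tauto
  have hsub : Icc (-t) t ⊆ Ioo (-t) t ∪ {-t} ∪ {t} := by
    intro y hy
    rcases eq_or_lt_of_le hy.1 with h | h
    · exact Or.inl (Or.inr (by simp [← h]))
    rcases eq_or_lt_of_le hy.2 with h2 | h2
    · exact Or.inr (by simp [h2])
    · exact Or.inl (Or.inl ⟨h, h2⟩)
  have hu : gaussianReal 0 1 (Ioo (-t) t ∪ {-t} ∪ {t}) = gaussianReal 0 1 (Ioo (-t) t) := by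
    rw [aux_gauss_union_singleton, aux_gauss_union_singleton]
  have hIoo : gaussianReal 0 1 (Ioo (-t) t) = gaussianReal 0 1 {y : ℝ | |y| ≤ t} := by
    have hle : {y : ℝ | |y| ≤ t} = Icc (-t) t := by ext y; simp [abs_le]
    rw [hle]
    refine le_antisymm (measure_mono Ioo_subset_Icc_self) ?_
    calc gaussianReal 0 1 (Icc (-t) t) ≤ gaussianReal 0 1 (Ioo (-t) t ∪ {-t} ∪ {t}) :=
          measure_mono hsub
      _ = _ := hu
  rw [hset, measure_compl measurableSet_Ioo (measure_ne_top _ _), measure_univ,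
    ENNReal.toReal_sub_of_le prob_le_one ENNReal.one_ne_top, hIoo, aux_gauss_abs_le t ht,
    ENNReal.toReal_one]
  ring

end AuxHD


section AuxHD2

open ProbabilityTheory Real Set
open scoped NNReal ENNReal

private lemma aux_dot_measurable {k : ℕ} (u : Fin k → ℝ) :
    Measurable fun x : Fin k → ℝ => u ⬝ᵥ x := by
  show Measurable fun x : Fin k → ℝ => ∑ i, u i * x i
  exact Finset.measurable_sum _ fun i _ => by fun_prop

private lemma aux_map_dot {k : ℕ} (u : Fin k → ℝ) (hu : u ⬝ᵥ u = 1) :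
    Measure.map (fun w : Fin k → ℝ => u ⬝ᵥ w) (Measure.pi fun _ => gaussianReal 0 1)
      = gaussianReal 0 1 := by
  have h := aux_dot_pi_gaussian k u
  have hsum : (∑ i, (u i)^2 : ℝ) = 1 := by
    rw [← hu]
    simp [dotProduct, sq]
  rw [show (fun w : Fin k → ℝ => u ⬝ᵥ w) = fun w => ∑ i, u i * w i from rfl, h, hsum]
  simp

private lemma aux_P_abs_le {k : ℕ} (b : ℝ) (hb : 0 < b) (u : Fin k → ℝ) (hu : u ⬝ᵥ u = 1)
    (t : ℝ) (ht : 0 ≤ t) :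
    (((Measure.pi fun _ : Fin k => gaussianReal 0 1).map (fun w i => w i / b))
      {x | |u ⬝ᵥ x| ≤ t}).toReal = 2 * Phi (b * t) - 1 := by
  have hφ : Measurable fun w : Fin k → ℝ => (fun i => w i / b) :=
    measurable_pi_lambda _ fun i => by fun_prop
  have hsetm : MeasurableSet {x : Fin k → ℝ | |u ⬝ᵥ x| ≤ t} :=
    measurableSet_le (aux_dot_measurable u).abs measurable_const
  rw [Measure.map_apply hφ hsetm]
  have hpre : (fun w : Fin k → ℝ => fun i => w i / b) ⁻¹' {x | |u ⬝ᵥ x| ≤ t}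
      = (fun w : Fin k → ℝ => u ⬝ᵥ w) ⁻¹' {y : ℝ | |y| ≤ b * t} := by
    ext w
    simp only [mem_preimage, mem_setOf_eq]
    have hdot : u ⬝ᵥ (fun i => w i / b) = (u ⬝ᵥ w) / b := by
      simp [dotProduct, Finset.sum_div, mul_div_assoc]
    rw [hdot, abs_div, abs_of_pos hb, div_le_iff₀ hb, mul_comm]
  rw [hpre, ← Measure.map_apply (aux_dot_measurable u)
    (measurableSet_le measurable_abs measurable_const), aux_map_dot u hu]
  exact aux_gauss_abs_le (b*t) (by positivity)

private lemma aux_P_abs_ge {k : ℕ} (b : ℝ) (hb : 0 < b) (u : Fin k → ℝ) (hu : u ⬝ᵥ u = 1)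
    (t : ℝ) (ht : 0 ≤ t) :
    (((Measure.pi fun _ : Fin k => gaussianReal 0 1).map (fun w i => w i / b))
      {x | t ≤ |u ⬝ᵥ x|}).toReal = 2 - 2 * Phi (b * t) := by
  have hφ : Measurable fun w : Fin k → ℝ => (fun i => w i / b) :=
    measurable_pi_lambda _ fun i => by fun_prop
  have hsetm : MeasurableSet {x : Fin k → ℝ | t ≤ |u ⬝ᵥ x|} :=
    measurableSet_le measurable_const (aux_dot_measurable u).abs
  rw [Measure.map_apply hφ hsetm]
  have hpre : (fun w : Fin k → ℝ => fun i => w i / b) ⁻¹' {x | t ≤ |u ⬝ᵥ x|}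
      = (fun w : Fin k → ℝ => u ⬝ᵥ w) ⁻¹' {y : ℝ | b * t ≤ |y|} := by
    ext w
    simp only [mem_preimage, mem_setOf_eq]
    have hdot : u ⬝ᵥ (fun i => w i / b) = (u ⬝ᵥ w) / b := by
      simp [dotProduct, Finset.sum_div, mul_div_assoc]
    rw [hdot, abs_div, abs_of_pos hb, le_div_iff₀ hb, mul_comm]
  rw [hpre, ← Measure.map_apply (aux_dot_measurable u)
    (measurableSet_le measurable_const measurable_abs), aux_map_dot u hu]
  exact aux_gauss_abs_ge (b*t) (by positivity)

private lemma aux_Phi_le_one (x : ℝ) : Phi x ≤ 1 := cdf_le_one _ x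

end AuxHD2

/-- explicit scatter halfspace depth for the standard `k`-variate
Gaussian measure normalized so that `MAD = 1` (i.e. `X = W/b` with `W` standard
normal and `Φ(b) = 3/4`), with `T_P = 0`. -/
theorem HD_gaussian {k : ℕ} [NeZero k] (b : ℝ) (hb : Phi b = 3 / 4)
    (P : Measure (Fin k → ℝ))
    (hP : P = (Measure.pi fun _ : Fin k => ProbabilityTheory.gaussianReal 0 1).map
      (fun w i => w i / b))
    (Sg : Matrix (Fin k) (Fin k) ℝ) (hSg : Sg.PosDef) :
    HD P 0 Sg =
      2 * min (Phi (b * Real.sqrt (lamMin Sg)) - 1 / 2)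
              (1 - Phi (b * Real.sqrt (lamMax Sg))) := by
  classical
  subst hP
  have hb0 : 0 < b := by
    by_contra h
    push_neg at h
    have h2 := aux_Phi_mono h
    rw [aux_Phi_zero, hb] at h2
    linarith
  set qf : (Fin k → ℝ) → ℝ := fun v => v ⬝ᵥ Sg *ᵥ v with hqf
  set Sph : Set (Fin k → ℝ) := {u | u ⬝ᵥ u = 1} with hSph
  -- continuity of the quadratic form
  have hqcont : Continuous qf := by
    show Continuous fun v : Fin k → ℝ => ∑ i, v i * ∑ j, Sg i j * v j
    exact continuous_finset_sum _ fun i _ => (continuous_apply i).mul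
      (continuous_finset_sum _ fun j _ => continuous_const.mul (continuous_apply j))
  have hdotcont : Continuous fun v : Fin k → ℝ => v ⬝ᵥ v := by
    show Continuous fun v : Fin k → ℝ => ∑ i, v i * v i
    exact continuous_finset_sum _ fun i _ => (continuous_apply i).mul (continuous_apply i)
  -- compactness of the sphere
  have hclosed : IsClosed Sph := isClosed_eq hdotcont continuous_const
  have hsub : Sph ⊆ Metric.closedBall 0 1 := by
    intro v hv
    rw [Metric.mem_closedBall, dist_zero_right]
    rw [pi_norm_le_iff_of_nonneg zero_le_one]
    intro i
    rw [Real.norm_eq_abs, abs_le_one_iff_mul_self_le_one]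
    have : v i * v i ≤ ∑ j, v j * v j :=
      Finset.single_le_sum (fun j _ => mul_self_nonneg (v j)) (Finset.mem_univ i)
    calc v i * v i ≤ ∑ j, v j * v j := this
      _ = 1 := hv
  have hcompact : IsCompact Sph :=
    (isCompact_closedBall (0 : Fin k → ℝ) 1).of_isClosed_subset hclosed hsub
  have hne : Sph.Nonempty := by
    refine ⟨fun i => if i = 0 then 1 else 0, ?_⟩
    show (fun i : Fin k => if i = 0 then (1:ℝ) else 0) ⬝ᵥ _ = 1
    simp [dotProduct, ite_and]
  haveI hnei : Nonempty {u : Fin k → ℝ // u ⬝ᵥ u = 1} := ⟨⟨hne.choose, hne.choose_spec⟩⟩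
  obtain ⟨u₀, hu₀, hmin⟩ := hcompact.exists_isMinOn hne hqcont.continuousOn
  obtain ⟨u₁, hu₁, hmax⟩ := hcompact.exists_isMaxOn hne hqcont.continuousOn
  have hlamMin : lamMin Sg = qf u₀ := by
    rw [lamMin]
    refine le_antisymm (ciInf_le (f := fun u : {u : Fin k → ℝ // u ⬝ᵥ u = 1} => u.1 ⬝ᵥ Sg *ᵥ u.1) ⟨qf u₀, ?_⟩ ⟨u₀, hu₀⟩) (le_ciInf fun v => hmin v.2)
    rintro _ ⟨v, rfl⟩
    exact hmin v.2
  have hlamMax : lamMax Sg = qf u₁ := by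
    rw [lamMax]
    refine le_antisymm (ciSup_le fun v => hmax v.2)
      (le_ciSup (f := fun u : {u : Fin k → ℝ // u ⬝ᵥ u = 1} => u.1 ⬝ᵥ Sg *ᵥ u.1)
        ⟨qf u₁, ?_⟩ ⟨u₁, hu₁⟩)
    rintro _ ⟨v, rfl⟩
    exact hmax v.2
  have hqpos : ∀ v ∈ Sph, 0 < qf v := by
    intro v hv
    have hv0 : v ≠ 0 := by
      intro h0
      rw [h0] at hv
      simp only [hSph, Set.mem_setOf_eq, zero_dotProduct] at hv
      exact one_ne_zero hv.symm
    have := hSg.dotProduct_mulVec_pos hv0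
    simpa using this
  have hminpos : 0 < qf u₀ := hqpos u₀ hu₀
  -- the depth function evaluated at each direction
  have hval : ∀ u : {u : Fin k → ℝ // u ⬝ᵥ u = 1},
      min (((Measure.pi fun _ : Fin k => ProbabilityTheory.gaussianReal 0 1).map
              (fun w i => w i / b)) {x | |u.1 ⬝ᵥ (x - 0)| ≤ Real.sqrt (u.1 ⬝ᵥ Sg *ᵥ u.1)}).toReal
          (((Measure.pi fun _ : Fin k => ProbabilityTheory.gaussianReal 0 1).map
              (fun w i => w i / b)) {x | Real.sqrt (u.1 ⬝ᵥ Sg *ᵥ u.1) ≤ |u.1 ⬝ᵥ (x - 0)|}).toReal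
        = min (2 * Phi (b * Real.sqrt (qf u.1)) - 1) (2 - 2 * Phi (b * Real.sqrt (qf u.1))) := by
    rintro ⟨u, hu⟩
    have hx0 : ∀ x : Fin k → ℝ, x - 0 = x := fun x => sub_zero x
    simp only [hx0]
    rw [aux_P_abs_le b hb0 u hu _ (Real.sqrt_nonneg _),
      aux_P_abs_ge b hb0 u hu _ (Real.sqrt_nonneg _)]
  rw [HD]
  simp only [hval]
  -- monotonicity facts
  have hPhi_le : ∀ v : {u : Fin k → ℝ // u ⬝ᵥ u = 1},
      Phi (b * Real.sqrt (qf u₀)) ≤ Phi (b * Real.sqrt (qf v.1)) := fun v =>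
    aux_Phi_mono (mul_le_mul_of_nonneg_left (Real.sqrt_le_sqrt (hmin v.2)) hb0.le)
  have hPhi_ge : ∀ v : {u : Fin k → ℝ // u ⬝ᵥ u = 1},
      Phi (b * Real.sqrt (qf v.1)) ≤ Phi (b * Real.sqrt (qf u₁)) := fun v =>
    aux_Phi_mono (mul_le_mul_of_nonneg_left (Real.sqrt_le_sqrt (hmax v.2)) hb0.le)
  have hRHS : 2 * min (Phi (b * Real.sqrt (lamMin Sg)) - 1 / 2)
        (1 - Phi (b * Real.sqrt (lamMax Sg)))
      = min (2 * Phi (b * Real.sqrt (qf u₀)) - 1) (2 - 2 * Phi (b * Real.sqrt (qf u₁))) := by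
    rw [hlamMin, hlamMax]
    rcases le_total (Phi (b * Real.sqrt (qf u₀)) - 1 / 2) (1 - Phi (b * Real.sqrt (qf u₁)))
      with h | h
    · rw [min_eq_left h, min_eq_left (by linarith)]
      ring
    · rw [min_eq_right h, min_eq_right (by linarith)]
      ring
  rw [hRHS]
  refine le_antisymm (le_min ?_ ?_) (le_ciInf fun v => le_min ?_ ?_)
  · refine le_trans (ciInf_le ⟨0, ?_⟩ ⟨u₀, hu₀⟩) ?_
    · rintro _ ⟨v, rfl⟩
      have h1 : (1:ℝ) ≤ 2 * Phi (b * Real.sqrt (qf v.1)) := by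
        have := hPhi_le v
        have h0 : Phi 0 ≤ Phi (b * Real.sqrt (qf u₀)) :=
          aux_Phi_mono (by positivity)
        rw [aux_Phi_zero] at h0
        linarith
      have h2 : Phi (b * Real.sqrt (qf v.1)) ≤ 1 := aux_Phi_le_one _
      exact le_min (by linarith) (by linarith)
    · exact min_le_left _ _
  · refine le_trans (ciInf_le ⟨0, ?_⟩ ⟨u₁, hu₁⟩) ?_
    · rintro _ ⟨v, rfl⟩
      have h1 : (1:ℝ) ≤ 2 * Phi (b * Real.sqrt (qf v.1)) := by
        have := hPhi_le v
        have h0 : Phi 0 ≤ Phi (b * Real.sqrt (qf u₀)) :=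
          aux_Phi_mono (by positivity)
        rw [aux_Phi_zero] at h0
        linarith
      have h2 : Phi (b * Real.sqrt (qf v.1)) ≤ 1 := aux_Phi_le_one _
      exact le_min (by linarith) (by linarith)
    · exact min_le_right _ _
  · refine le_trans (min_le_left _ _) ?_
    have := hPhi_le v
    linarith
  · refine le_trans (min_le_right _ _) ?_
    have := hPhi_ge v
    linarith
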